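/- Let R be a commutative ring, S a multiplicative subset of R, and M an R-module. Let R(+)M denote the trivial extension of R by M and S(+)M = {(s, m) : s ∈ S, m ∈ M}, which is a multiplicative subset of R(+)M. Then R(+)M is a u-(S(+)M)-Noetherian ring if and only if R is a u-S-Noetherian ring and M is a u-S-Noetherian R-module. -/

import Mathlib

/-- An `R`-module `M` is uniformly `S`-Noetherian if there exists `s ∈ S` such that
every submodule `N` of `M` contains a finitely generated submodule `F` with `s • N ⊆ F`. -/
def IsUSNoetherianModule (R : Type*) [CommRing R] (S : Submonoid R)
    (M : Type*) [AddCommGroup M] [Module R M] : Prop :=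
  ∃ s ∈ S, ∀ N : Submodule R M, ∃ F : Submodule R M,
    F.FG ∧ F ≤ N ∧ ∀ x ∈ N, s • x ∈ F

/-- A commutative ring `R` is uniformly `S`-Noetherian if there exists `s ∈ S` such that
every ideal `I` of `R` contains a finitely generated ideal `K` with `s • I ⊆ K`. -/
def IsUSNoetherianRing (R : Type*) [CommRing R] (S : Submonoid R) : Prop :=
  ∃ s ∈ S, ∀ I : Ideal R, ∃ K : Ideal R,
    K.FG ∧ K ≤ I ∧ ∀ x ∈ I, s * x ∈ K

open TrivSqZeroExt

/-- `fst` as a ring hom. -/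
def tszeFstRingHom (R M : Type*) [CommRing R] [AddCommGroup M] [Module R M]
    [Module Rᵐᵒᵖ M] [SMulCommClass R Rᵐᵒᵖ M] : TrivSqZeroExt R M →+* R where
  toFun := fst
  map_one' := fst_one
  map_mul' := fst_mul
  map_zero' := fst_zero (M := M)
  map_add' := fst_add

theorem tszeFstRingHom_surjective (R M : Type*) [CommRing R] [AddCommGroup M] [Module R M]
    [Module Rᵐᵒᵖ M] [SMulCommClass R Rᵐᵒᵖ M] :
    Function.Surjective (tszeFstRingHom R M) := fun r => ⟨inl r, fst_inl M r⟩

/-- The trivial extension `R(+)M` is `u`-`(S(+)M)`-Noetherian iff `R` is `u`-`S`-Noetherian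
and `M` is a `u`-`S`-Noetherian `R`-module.  Here `R(+)M` is realized as `TrivSqZeroExt R M`
(with the canonical central `Rᵐᵒᵖ`-action on `M`), and `S(+)M` is the multiplicative subset
of pairs whose first component lies in `S`. -/
theorem trivSqZeroExt_isUSNoetherianRing_iff
    (R : Type*) [CommRing R] (S : Submonoid R)
    (M : Type*) [AddCommGroup M] [Module R M] :
    letI : Module Rᵐᵒᵖ M := Module.compHom M ((RingHom.id R).fromOpposite mul_comm)
    letI : IsCentralScalar R M := ⟨fun _ _ => rfl⟩
    ∀ SM : Submonoid (TrivSqZeroExt R M),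
      (SM : Set (TrivSqZeroExt R M)) = {x : TrivSqZeroExt R M | x.fst ∈ S} →
      (IsUSNoetherianRing (TrivSqZeroExt R M) SM ↔
        IsUSNoetherianRing R S ∧ IsUSNoetherianModule R S M) := by
  letI : Module Rᵐᵒᵖ M := Module.compHom M ((RingHom.id R).fromOpposite mul_comm)
  letI : IsCentralScalar R M := ⟨fun _ _ => rfl⟩
  intro SM hSM
  have hmem : ∀ x : TrivSqZeroExt R M, x ∈ SM ↔ x.fst ∈ S := by
    intro x
    rw [← SetLike.mem_coe, hSM]
    rfl
  set f := tszeFstRingHom R M with hf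
  have hfs := tszeFstRingHom_surjective R M
  constructor
  · rintro ⟨u, huS, hu⟩
    have hs : u.fst ∈ S := (hmem u).1 huS
    constructor
    · -- R is u-S-Noetherian
      refine ⟨u.fst, hs, fun I => ?_⟩
      obtain ⟨K, hKfg, hKJ, hK⟩ := hu (I.comap f)
      refine ⟨K.map f, hKfg.map f, Ideal.map_le_iff_le_comap.mpr hKJ, fun x hx => ?_⟩
      have hux : u * inl x ∈ K := hK _ (by rw [Ideal.mem_comap]; show (inl x : TrivSqZeroExt R M).fst ∈ I; rw [fst_inl]; exact hx)
      have : f (u * inl x) = u.fst * x := by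
        show (u * inl x).fst = _
        rw [fst_mul, fst_inl]
      exact this ▸ Ideal.mem_map_of_mem f hux
    · -- M is u-S-Noetherian
      refine ⟨u.fst, hs, fun N => ?_⟩
      let J : Ideal (TrivSqZeroExt R M) :=
        { carrier := {x | x.fst = 0 ∧ x.snd ∈ N}
          add_mem' := fun ha hb =>
            ⟨by rw [fst_add, ha.1, hb.1, add_zero],
             by rw [snd_add]; exact N.add_mem ha.2 hb.2⟩
          zero_mem' := ⟨fst_zero, N.zero_mem⟩
          smul_mem' := fun c x hx => by
            refine ⟨?_, ?_⟩
            · show (c * x).fst = 0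
              rw [fst_mul, hx.1, mul_zero]
            · show (c * x).snd ∈ N
              rw [snd_mul, hx.1, MulOpposite.op_zero, zero_smul, add_zero]
              exact N.smul_mem _ hx.2 }
      obtain ⟨K, hKfg, hKJ, hK⟩ := hu J
      obtain ⟨G, hG⟩ := hKfg
      have hG0 : ∀ g ∈ (G : Set (TrivSqZeroExt R M)), g.fst = 0 :=
        fun g hg => (hKJ (hG ▸ Ideal.subset_span hg)).1
      have key : ∀ x ∈ Ideal.span (G : Set (TrivSqZeroExt R M)),
          x.fst = 0 ∧ x.snd ∈ Submodule.span R (snd '' (G : Set (TrivSqZeroExt R M))) := by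
        intro x hx
        refine Submodule.span_induction ?_ ?_ ?_ ?_ hx
        · exact fun g hg => ⟨hG0 g hg, Submodule.subset_span ⟨g, hg, rfl⟩⟩
        · exact ⟨rfl, Submodule.zero_mem _⟩
        · intro a b _ _ ha hb
          exact ⟨by rw [fst_add, ha.1, hb.1, add_zero],
            by rw [snd_add]; exact Submodule.add_mem _ ha.2 hb.2⟩
        · intro c a _ ha
          refine ⟨?_, ?_⟩
          · show (c * a).fst = 0
            rw [fst_mul, ha.1, mul_zero]
          · show (c * a).snd ∈ _
            rw [snd_mul, ha.1, MulOpposite.op_zero, zero_smul, add_zero]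
            exact Submodule.smul_mem _ _ ha.2
      refine ⟨Submodule.span R (snd '' (G : Set (TrivSqZeroExt R M))),
        Submodule.fg_span ((G.finite_toSet).image _), ?_, ?_⟩
      · rw [Submodule.span_le]
        rintro _ ⟨g, hg, rfl⟩
        exact (hKJ (hG ▸ Ideal.subset_span hg)).2
      · intro n hn
        have hinr : inr n ∈ J := ⟨rfl, by simpa using hn⟩
        have hun : u * inr n ∈ Ideal.span (G : Set (TrivSqZeroExt R M)) := by
          rw [hG]; exact hK _ hinr
        have hsnd : (u * inr n).snd = u.fst • n := by
          rw [snd_mul, fst_inr, snd_inr, MulOpposite.op_zero, zero_smul, add_zero]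
        exact hsnd ▸ (key _ hun).2
  · rintro ⟨⟨s₁, hs₁, h₁⟩, s₂, hs₂, h₂⟩
    refine ⟨inl (s₂ * s₁), (hmem _).2 (by simpa using S.mul_mem hs₂ hs₁), fun J => ?_⟩
    obtain ⟨K, hKfg, hKI, hK⟩ := h₁ (J.map f)
    obtain ⟨GK, hGK⟩ := hKfg
    have hlift : ∀ a ∈ (GK : Set R), ∃ x, x ∈ J ∧ f x = a := by
      intro a ha
      exact (Ideal.mem_map_iff_of_surjective f hfs).1 (hKI (hGK ▸ Ideal.subset_span ha))
    choose x hxJ hxf using hlift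
    let N₀ : Submodule R M :=
      { carrier := {m | inr m ∈ J}
        add_mem' := fun {a b} ha hb => by
          show inr (a + b) ∈ J
          rw [inr_add]; exact J.add_mem ha hb
        zero_mem' := by show (inr 0 : TrivSqZeroExt R M) ∈ J; simpa using J.zero_mem
        smul_mem' := fun c m hm => by
          show inr (c • m) ∈ J
          rw [← inl_mul_inr]
          exact J.mul_mem_left _ hm }
    obtain ⟨F, hFfg, hFN, hF⟩ := h₂ N₀
    obtain ⟨GF, hGF⟩ := hFfg
    set X : Set (TrivSqZeroExt R M) := {y | ∃ a, ∃ ha : a ∈ (GK : Set R), y = x a ha} with hX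
    have hXfin : X.Finite := by
      have : X ⊆ (fun a : GK => x a.1 a.2) '' Set.univ := by
        rintro y ⟨a, ha, rfl⟩
        exact ⟨⟨a, ha⟩, trivial, rfl⟩
      exact Set.Finite.subset ((Set.finite_univ).image _) this
    set K' : Ideal (TrivSqZeroExt R M) :=
      Ideal.span (X ∪ inr '' (GF : Set M)) with hK'
    have hK'J : K' ≤ J := by
      rw [hK', Ideal.span_le]
      rintro y (⟨a, ha, rfl⟩ | ⟨m, hm, rfl⟩)
      · exact hxJ a ha
      · exact hFN (hGF ▸ Submodule.subset_span hm)
    have hinrF : ∀ m ∈ F, inr m ∈ K' := by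
      intro m hm
      rw [← hGF] at hm
      refine Submodule.span_induction ?_ ?_ ?_ ?_ hm
      · exact fun g hg => Ideal.subset_span (Or.inr ⟨g, hg, rfl⟩)
      · simpa using K'.zero_mem
      · intro a b _ _ ha hb
        rw [inr_add]; exact K'.add_mem ha hb
      · intro r a _ ha
        rw [← inl_mul_inr]
        exact K'.mul_mem_left _ ha
    have himg : f '' X = (GK : Set R) := by
      ext r
      constructor
      · rintro ⟨y, ⟨a, ha, rfl⟩, rfl⟩
        rw [hxf]; exact ha
      · intro hr
        exact ⟨x r hr, ⟨r, hr, rfl⟩, hxf r hr⟩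
    have hmap : Ideal.map f (Ideal.span X) = K := by
      rw [Ideal.map_span, himg, hGK]
    have hliftK : ∀ r ∈ K, ∃ y ∈ Ideal.span X, f y = r := by
      intro r hr
      rw [← hmap] at hr
      obtain ⟨y, hy, hfy⟩ := (Ideal.mem_map_iff_of_surjective f hfs).1 hr
      exact ⟨y, hy, hfy⟩
    refine ⟨K', Submodule.fg_span (hXfin.union ((GF.finite_toSet).image _)), hK'J, ?_⟩
    intro z hz
    have hr : s₁ * f z ∈ K := hK _ (Ideal.mem_map_of_mem f hz)
    obtain ⟨y, hy, hfy⟩ := hliftK _ hr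
    have hyK' : y ∈ K' := Ideal.span_mono Set.subset_union_left hy
    set w : TrivSqZeroExt R M := inl s₁ * z - y with hwdef
    have hwJ : w ∈ J := J.sub_mem (J.mul_mem_left _ hz) (hK'J hyK')
    have hwfst : w.fst = 0 := by
      show f w = 0
      rw [hwdef, map_sub, map_mul, hfy]
      show (inl s₁ : TrivSqZeroExt R M).fst * f z - s₁ * f z = 0
      rw [fst_inl, sub_self]
    have hw2 : w = inr w.snd := by
      conv_lhs => rw [← inl_fst_add_inr_snd_eq w]
      rw [hwfst, inl_zero, zero_add]
    have hwN : w.snd ∈ N₀ := by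
      show inr w.snd ∈ J
      rw [← hw2]; exact hwJ
    have hsw : inl s₂ * w ∈ K' := by
      rw [hw2, inl_mul_inr]
      exact hinrF _ (hF _ hwN)
    have hfinal : inl (s₂ * s₁) * z = inl s₂ * y + inl s₂ * w := by
      rw [hwdef, inl_mul]
      ring
    rw [hfinal]
    exact K'.add_mem (K'.mul_mem_left _ hyK') hsw
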